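/- Let f : ℕ → ℝ≥0 satisfy |2·f(i+1) - f(i)| ≤ 10·√(f(i)·log(f(i)·r)) for all i < k, and suppose f(0)·2^{-k} ≥ C·ε^{-2}·log(r/ε) for a sufficiently large absolute constant C (with 0 < ε ≤ 1, r ≥ 2). Then |2^k·f(k) - f(0)| ≤ ε·f(0). -/

import Mathlib

set_option maxHeartbeats 1000000

private lemma le_of_sq_le_sq' {x y : ℝ} (hy : 0 ≤ y) (h : x^2 ≤ y^2) (hx : 0 ≤ x) : x ≤ y := by
  nlinarith

private lemma bern (j : ℕ) : (1 : ℝ) + j ≤ 9 * (9/8)^j := by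
  have h := one_add_mul_le_pow (a := (1/8 : ℝ)) (by norm_num) j
  have : (1:ℝ) + (1/8 : ℝ)*j ≤ (9/8)^j := by
    calc (1:ℝ) + (1/8:ℝ)*j = 1 + j*(1/8) := by ring
    _ ≤ (1 + 1/8)^j := h
    _ = (9/8)^j := by norm_num
  nlinarith [this]

theorem stmt_16 :
    ∃ C : ℝ, 0 < C ∧
      ∀ (r ε : ℝ) (f : ℕ → ℝ) (k : ℕ),
        2 ≤ r → 0 < ε → ε ≤ 1 →
        (∀ i, 0 ≤ f i) →
        (∀ i < k, 1 ≤ f i * r) →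
        (∀ i < k, |2 * f (i + 1) - f i| ≤ 10 * Real.sqrt (f i * Real.log (f i * r))) →
        C * ε⁻¹ ^ 2 * Real.log (r / ε) ≤ f 0 / 2 ^ k →
        |2 ^ k * f k - f 0| ≤ ε * f 0 := by
  refine ⟨10^12, by norm_num, ?_⟩
  intro r ε f k hr hε hε1 hf0 hfr hstep hC
  have hr0 : (0:ℝ) < r := lt_of_lt_of_le (by norm_num) hr
  have h2k : (0:ℝ) < 2^k := by positivity
  set M : ℝ := f 0 with hM
  set A : ℝ := M / 2^k with hA
  set B : ℝ := ε^2 * A with hB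
  have hB1 : 10^12 * Real.log (r/ε) ≤ B := by
    have := mul_le_mul_of_nonneg_left hC (le_of_lt (by positivity : (0:ℝ) < ε^2))
    calc 10^12 * Real.log (r/ε) = ε^2 * (10^12 * ε⁻¹^2 * Real.log (r/ε)) := by
          field_simp
      _ ≤ ε^2 * A := this
  have hlogr : 0 < Real.log r := Real.log_pos (by linarith)
  have hlogε : 0 ≤ -Real.log ε := by
    have := Real.log_nonpos (le_of_lt hε) hε1
    linarith
  have hlrε : Real.log (r/ε) = Real.log r - Real.log ε :=
    Real.log_div (ne_of_gt hr0) (ne_of_gt hε)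
  have hlog2 : Real.log 2 ≤ Real.log r := Real.log_le_log (by norm_num) hr
  have hlog2pos : (0:ℝ) < Real.log 2 := Real.log_pos (by norm_num)
  have hB0 : 10^12 * Real.log 2 ≤ B := by
    have h1 : Real.log 2 ≤ Real.log (r/ε) := by rw [hlrε]; linarith
    have h2 : 10^12 * Real.log 2 ≤ 10^12 * Real.log (r/ε) :=
      mul_le_mul_of_nonneg_left h1 (by norm_num)
    linarith
  have hBbig : (6:ℝ)*10^11 ≤ B := by
    have h2 : (0.6 : ℝ) ≤ Real.log 2 := by
      have := Real.log_two_gt_d9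
      linarith
    linarith
  have hBpos : 0 < B := by linarith
  have hApos : 0 < A := by
    by_contra h
    push_neg at h
    have h1 : (0:ℝ) ≤ ε^2 * (-A) := mul_nonneg (sq_nonneg ε) (by linarith)
    rw [hB] at hBpos
    linarith
  have hA1 : 1 ≤ A := by
    have h1 : ε^2 ≤ 1 := pow_le_one₀ hε.le hε1
    have h2 : ε^2 * A ≤ 1 * A := mul_le_mul_of_nonneg_right h1 hApos.le
    have h3 : B ≤ A := by rw [hB]; linarith
    linarith
  have hMAk : M = A * 2^k := by rw [hA, div_mul_cancel₀ _ h2k.ne']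
  have hMpos : 0 < M := by rw [hMAk]; exact mul_pos hApos h2k
  have hAr : (2:ℝ) ≤ A * r := by
    have h1 : (1:ℝ)*2 ≤ A*r := mul_le_mul hA1 hr (by norm_num) hApos.le
    linarith
  set L : ℝ := Real.log (2*A*r) with hL
  have hLnonneg : 0 ≤ L := Real.log_nonneg (by rw [mul_assoc]; linarith)
  have hL2 : Real.log 2 ≤ L := Real.log_le_log (by norm_num) (by rw [mul_assoc]; linarith)
  -- key numeric inequality
  have hlr : Real.log r ≤ B/10^12 := by rw [hlrε] at hB1; linarith
  have hlε : -Real.log ε ≤ B/10^12 := by rw [hlrε] at hB1; linarith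
  have hsq : Real.sqrt B * Real.sqrt B = B := Real.mul_self_sqrt hBpos.le
  have hsB : (67600:ℝ) ≤ Real.sqrt B := by
    have h1 : ((67600:ℝ))^2 ≤ B := by norm_num; linarith
    calc (67600:ℝ) = Real.sqrt (67600^2) := (Real.sqrt_sq (by norm_num)).symm
      _ ≤ Real.sqrt B := Real.sqrt_le_sqrt h1
  have hlogB : Real.log B ≤ 2 * Real.sqrt B := by
    have hsp : 0 < Real.sqrt B := Real.sqrt_pos.mpr hBpos
    have h1 : Real.log (Real.sqrt B) ≤ Real.sqrt B - 1 := Real.log_le_sub_one_of_pos hsp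
    have h2 : Real.log (Real.sqrt B) = Real.log B / 2 := Real.log_sqrt hBpos.le
    linarith
  have h33 : 33800 * Real.sqrt B ≤ B/2 := by
    have h1 : (67600:ℝ) * Real.sqrt B ≤ Real.sqrt B * Real.sqrt B :=
      mul_le_mul_of_nonneg_right hsB (Real.sqrt_nonneg B)
    rw [hsq] at h1
    linarith
  have hlogA : Real.log A = Real.log B - 2*Real.log ε := by
    have hAeq : A = B / ε^2 := by rw [hB]; field_simp
    rw [hAeq, Real.log_div hBpos.ne' (by positivity), Real.log_pow]
    push_cast; ring
  have hlog2Ar : L = Real.log 2 + Real.log A + Real.log r := by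
    rw [hL, Real.log_mul (by positivity) hr0.ne', Real.log_mul two_ne_zero hApos.ne']
  have hKey : 16900 * L ≤ B := by
    rw [hlog2Ar, hlogA]
    linarith
  -- the drift bound
  set c : ℝ := Real.sqrt (1800 * 4^k * (A*L)) with hc
  have hcnn : 0 ≤ c := Real.sqrt_nonneg _
  have hcsq : c^2 = 1800 * 4^k * (A*L) :=
    Real.sq_sqrt (by
      have : (0:ℝ) ≤ A*L := mul_nonneg hApos.le hLnonneg
      have h4 : (0:ℝ) ≤ 1800*4^k := by positivity
      exact mul_nonneg h4 this)
  have h4k : ((2:ℝ)^k)^2 = 4^k := by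
    rw [← pow_mul, mul_comm, pow_mul]; norm_num
  have hεM : 3*c ≤ ε*M := by
    refine le_of_sq_le_sq' (mul_nonneg hε.le hMpos.le) ?_
      (mul_nonneg (by norm_num) hcnn)
    have hM2 : M^2 = A^2 * 4^k := by rw [hMAk, mul_pow, h4k]
    have h1 : (3*c)^2 = 16200 * 4^k * (A*L) := by rw [mul_pow, hcsq]; ring
    have h2 : (ε*M)^2 = B * A * 4^k := by rw [mul_pow, hM2, hB]; ring
    rw [h1, h2]
    have h16 : 16200 * L ≤ B := by linarith
    have h3 : (16200 * L) * A ≤ B * A := mul_le_mul_of_nonneg_right h16 hApos.le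
    have h4 := mul_le_mul_of_nonneg_right h3 (le_of_lt (pow_pos (by norm_num : (0:ℝ) < 4) k))
    linarith [h4]
  -- invariant
  have inv : ∀ i, i ≤ k → |2^i * f i - M| ≤ 3*c*(3/4:ℝ)^(k-i) := by
    intro i
    induction i with
    | zero =>
      intro _
      simp only [pow_zero, one_mul, hM, sub_self, abs_zero]
      exact mul_nonneg (mul_nonneg (by norm_num) hcnn) (by positivity)
    | succ n ih =>
      intro hn
      have hnk : n < k := hn
      have ihn := ih hnk.le
      set j : ℕ := k - n with hj
      have hj1 : 1 ≤ j := by omega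
      have hkj : k = n + j := by omega
      have h34le1 : ((3:ℝ)/4)^j ≤ 1 := pow_le_one₀ (by norm_num) (by norm_num)
      have h34nn : (0:ℝ) ≤ (3/4:ℝ)^j := by positivity
      have h2n : (0:ℝ) < 2^n := by positivity
      have hgn : 2^n * f n ≤ 2*M := by
        have hq : 3*c*(3/4:ℝ)^j ≤ 3*c*1 :=
          mul_le_mul_of_nonneg_left h34le1 (by linarith)
        have h1 : |2^n * f n - M| ≤ 3*c := le_trans ihn (by linarith)
        have h3 : 3*c ≤ M := by
          have : ε*M ≤ 1*M := mul_le_mul_of_nonneg_right hε1 hMpos.le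
          linarith [hεM]
        have := (abs_le.mp h1).2
        linarith
      have hfr' : (1:ℝ) ≤ f n * r := hfr n hnk
      have hfn_pos : 0 < f n := by
        rcases lt_or_eq_of_le (hf0 n) with h | h
        · exact h
        · exfalso; rw [← h] at hfr'; norm_num at hfr'
      have hXnn : 0 ≤ f n * Real.log (f n * r) :=
        mul_nonneg (hf0 n) (Real.log_nonneg hfr')
      have h2pow : (2:ℝ)^k = 2^n * 2^j := by rw [hkj, pow_add]
      have hfn_le : f n ≤ 2*A*2^j := by
        have h2 : 2*M = 2*A*2^j*2^n := by rw [hMAk, h2pow]; ring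
        have hx : f n * 2^n ≤ (2*A*2^j) * 2^n := by linarith
        exact le_of_mul_le_mul_right hx h2n
      -- log bound
      have hlogle2 : Real.log (f n * r) ≤ L * (1 + j) := by
        have hle : f n * r ≤ (2*A*r) * 2^j := by
          have := mul_le_mul_of_nonneg_right hfn_le hr0.le
          linarith [this]
        have h1 : Real.log (f n * r) ≤ Real.log ((2*A*r)*2^j) :=
          Real.log_le_log (by positivity) hle
        have h2 : Real.log ((2*A*r)*2^j) = L + j * Real.log 2 := by
          rw [Real.log_mul (by positivity) (by positivity), Real.log_pow, hL]
        have h3 : (j:ℝ) * Real.log 2 ≤ (j:ℝ) * L :=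
          mul_le_mul_of_nonneg_left hL2 (Nat.cast_nonneg j)
        rw [h2] at h1
        linarith
      -- step error bound
      have hEb : 2^n * (10 * Real.sqrt (f n * Real.log (f n * r))) ≤ c * (3/4:ℝ)^j := by
        refine le_of_sq_le_sq' (mul_nonneg hcnn h34nn) ?_ (by positivity)
        have hsqX : (Real.sqrt (f n * Real.log (f n * r)))^2 = f n * Real.log (f n * r) :=
          Real.sq_sqrt hXnn
        have h4n : ((2:ℝ)^n)^2 = 4^n := by rw [← pow_mul, mul_comm, pow_mul]; norm_num
        have hLj : (0:ℝ) ≤ L * (1+j) := mul_nonneg hLnonneg (by positivity)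
        have hX2 : f n * Real.log (f n * r) ≤ (2*A*2^j) * (L*(1+j)) := by
          have s1 : f n * Real.log (f n * r) ≤ f n * (L*(1+j)) :=
            mul_le_mul_of_nonneg_left hlogle2 (hf0 n)
          have s2 : f n * (L*(1+j)) ≤ (2*A*2^j) * (L*(1+j)) :=
            mul_le_mul_of_nonneg_right hfn_le hLj
          linarith
        have hbern := bern j
        have e1 : (2^n * (10 * Real.sqrt (f n * Real.log (f n * r))))^2
            = 100 * (f n * Real.log (f n * r)) * 4^n := by
          rw [mul_pow, mul_pow, hsqX, h4n]; ring
        have e2 : (c * (3/4:ℝ)^j)^2 = 1800 * (4^n * 4^j) * (A*L) * (9/16:ℝ)^j := by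
          rw [mul_pow, hcsq, ← pow_mul, mul_comm j 2, pow_mul]
          have h4kk : ((4:ℝ))^k = 4^n * 4^j := by rw [hkj, pow_add]
          rw [h4kk]
          norm_num
        rw [e1, e2]
        have h4nn : (0:ℝ) < 4^n := by positivity
        have key2 : 100 * ((2*A*2^j) * (L*(1+j))) ≤ 1800 * 4^j * (A*L) * (9/16:ℝ)^j := by
          have hq : ((2:ℝ)^j) * (9*(9/8)^j) = 9 * ((4:ℝ)^j * (9/16)^j) := by
            calc ((2:ℝ)^j) * (9*(9/8)^j) = 9*((2:ℝ)^j*(9/8)^j) := by ring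
              _ = 9 * (((2:ℝ)*(9/8))^j) := by rw [mul_pow]
              _ = 9 * (((4:ℝ)*(9/16))^j) := by norm_num
              _ = 9 * ((4:ℝ)^j * (9/16)^j) := by rw [mul_pow]
          have t1 : (2:ℝ)^j * (1+j) ≤ 2^j * (9*(9/8)^j) :=
            mul_le_mul_of_nonneg_left hbern (by positivity)
          rw [hq] at t1
          have hAL : (0:ℝ) ≤ 200*(A*L) := by
            have := mul_nonneg hApos.le hLnonneg
            linarith
          have t4 := mul_le_mul_of_nonneg_left t1 hAL
          linarith [t4]
        have t2 := mul_le_mul_of_nonneg_right hX2 (le_of_lt h4nn)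
        have t3 := mul_le_mul_of_nonneg_right key2 (le_of_lt h4nn)
        linarith [t2, t3]
      -- combine
      have hd : |2^(n+1) * f (n+1) - 2^n * f n| ≤ c * (3/4:ℝ)^j := by
        have e : 2^(n+1) * f (n+1) - 2^n * f n = 2^n * (2 * f (n+1) - f n) := by ring
        rw [e, abs_mul, abs_of_pos h2n]
        calc 2^n * |2 * f (n+1) - f n|
            ≤ 2^n * (10 * Real.sqrt (f n * Real.log (f n * r))) :=
              mul_le_mul_of_nonneg_left (hstep n hnk) h2n.le
          _ ≤ c * (3/4:ℝ)^j := hEb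
      have hfinal : |2^(n+1) * f (n+1) - M| ≤ 4*c*(3/4:ℝ)^j := by
        calc |2^(n+1) * f (n+1) - M|
            ≤ |2^(n+1) * f (n+1) - 2^n * f n| + |2^n * f n - M| := by
              have := abs_sub_le (2^(n+1) * f (n+1)) (2^n * f n) M
              linarith
          _ ≤ c * (3/4:ℝ)^j + 3*c*(3/4:ℝ)^j := add_le_add hd ihn
          _ = 4*c*(3/4:ℝ)^j := by ring
      have hkn1 : k - (n+1) = j - 1 := by omega
      have hjj : j = (j-1) + 1 := by omega
      have hpow : (3/4:ℝ)^j = (3/4:ℝ)^(j-1) * (3/4) := by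
        conv_lhs => rw [hjj]
        rw [pow_succ]
      rw [hkn1]
      calc |2^(n+1) * f (n+1) - M| ≤ 4*c*(3/4:ℝ)^j := hfinal
        _ = 3*c*(3/4:ℝ)^(j-1) := by rw [hpow]; ring
  have hfin := inv k le_rfl
  simp only [Nat.sub_self, pow_zero, mul_one] at hfin
  linarith [abs_le.mp hfin]
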